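/- For every k ≥ 1, every m ∈ ℕ ∪ {∞}, and all n₁, n₂ ≥ 2k: p_k^S(n₁, m) = p_k^S(n₂, m) = p_k^S(∞, m), and symmetrically p_k^S(n, m₁) = p_k^S(n, m₂) = p_k^S(n, ∞) for all m₁, m₂ ≥ 2k. -/

import Mathlib

open MeasureTheory ENNReal
open scoped Classical

/-- A configuration: a coloring of `ℤ` with the two colors coded by `Bool`. -/
abbrev Config := ℤ → Bool

/-- A site `x` is unstable in `η` iff it lies in a monochromatic chain of length (at least) 3,
i.e. there is `y ∈ {x-2, x-1, x}` with `η y = η (y+1) = η (y+2)`. Spelled out explicitly. -/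
def Unstable (η : Config) (x : ℤ) : Prop :=
  (η (x - 2) = η (x - 1) ∧ η (x - 1) = η x) ∨
  (η (x - 1) = η x ∧ η x = η (x + 1)) ∨
  (η x = η (x + 1) ∧ η (x + 1) = η (x + 2))

instance (η : Config) (x : ℤ) : Decidable (Unstable η x) := by
  unfold Unstable; infer_instance

/-- One step of the dynamics: stable sites keep their color, unstable ones are recolored
using the fresh colors `c`. -/
def update (η : Config) (c : ℤ → Bool) : Config :=
  fun x => if Unstable η x then c x else η x

/-- `evolve ω η k = R^k(η)`: the configuration after `k` steps, where the simultaneous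
recoloring at step `j` uses the fresh colors `ω j`. -/
def evolve (ω : ℕ → ℤ → Bool) (η : Config) : ℕ → Config
  | 0 => η
  | k + 1 => update (evolve ω η k) (ω k)

/-- `μ` makes the coordinates of the coin field i.i.d. uniform on the two colors:
every finite cylinder event has probability `(1/2)^(number of coordinates)`. -/
def IIDCoins (μ : Measure (ℕ → ℤ → Bool)) : Prop :=
  ∀ (S : Finset (ℕ × ℤ)) (f : ℕ × ℤ → Bool),
    μ {ω | ∀ p ∈ S, ω p.1 p.2 = f p} = (1 / 2 : ℝ≥0∞) ^ S.card

/-- The number of unstable sites of a configuration. -/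
noncomputable def numUnstable (η : Config) : ℕ∞ := {x : ℤ | Unstable η x}.encard

/-- `p_k^I`: sup over configurations `η` with site `0` unstable of `P(σ_{R^k(η)}(0) = 0)`. -/
noncomputable def pI (μ : Measure (ℕ → ℤ → Bool)) (k : ℕ) : ℝ≥0∞ :=
  ⨆ (η : Config) (_ : Unstable η 0), μ {ω | Unstable (evolve ω η k) 0}

/-- `p_k^{III}`: sup over configurations `η` with sites `-1, 0, 1` all unstable of
`P(σ_{R^k(η)}(0) = 0)`. -/
noncomputable def pIII (μ : Measure (ℕ → ℤ → Bool)) (k : ℕ) : ℝ≥0∞ :=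
  ⨆ (η : Config) (_ : Unstable η (-1) ∧ Unstable η 0 ∧ Unstable η 1),
    μ {ω | Unstable (evolve ω η k) 0}

/-- The conditioning event of `p_k^S(n,m)` (at site `0`): all sites `i` with `-n ≤ i ≤ m`
are stable, and the boundary sites `-n-1` (if `n` is finite) and `m+1` (if `m` is finite)
are unstable.  The inequality `-n ≤ i ≤ m` in `ℕ∞` is coded using `Int.toNat`. -/
def SWindow (η : Config) (n m : ℕ∞) : Prop :=
  (∀ i : ℤ, (((-i).toNat : ℕ∞) ≤ n) → ((i.toNat : ℕ∞) ≤ m) → ¬ Unstable η i) ∧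
  (∀ nn : ℕ, n = (nn : ℕ∞) → Unstable η (-(nn : ℤ) - 1)) ∧
  (∀ mm : ℕ, m = (mm : ℕ∞) → Unstable η ((mm : ℤ) + 1))

/-- `p_k^S(n,m)` for `n, m ∈ ℕ ∪ {∞}`: sup over configurations `η` satisfying the stable-window
condition of `P(σ_{R^k(η)}(0) = 0)`. -/
noncomputable def pS (μ : Measure (ℕ → ℤ → Bool)) (k : ℕ) (n m : ℕ∞) : ℝ≥0∞ :=
  ⨆ (η : Config) (_ : SWindow η n m), μ {ω | Unstable (evolve ω η k) 0}

lemma unstable_congr {η η' : Config} {x : ℤ}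
    (h : ∀ y, x - 2 ≤ y → y ≤ x + 2 → η y = η' y) : Unstable η x ↔ Unstable η' x := by
  unfold Unstable
  rw [h (x-2) (by omega) (by omega), h (x-1) (by omega) (by omega),
    h x (by omega) (by omega), h (x+1) (by omega) (by omega), h (x+2) (by omega) (by omega)]

lemma update_congr {η η' : Config} {c : ℤ → Bool} {x : ℤ}
    (h : ∀ y, x - 2 ≤ y → y ≤ x + 2 → η y = η' y) : update η c x = update η' c x := by
  unfold update
  by_cases hU : Unstable η x
  · rw [if_pos hU, if_pos ((unstable_congr h).mp hU)]
  · rw [if_neg hU, if_neg (fun h' => hU ((unstable_congr h).mpr h')), h x (by omega) (by omega)]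

lemma update_stable {η : Config} {c : ℤ → Bool} {x : ℤ} (h : ¬ Unstable η x) :
    update η c x = η x := if_neg h

lemma evolve_agree_left (ω : ℕ → ℤ → Bool) (η η' : Config) (a : ℤ)
    (h0 : ∀ x, a ≤ x → η x = η' x)
    (hs1 : ¬ Unstable η a) (hs2 : ¬ Unstable η (a+1))
    (hs1' : ¬ Unstable η' a) (hs2' : ¬ Unstable η' (a+1)) :
    ∀ t : ℕ, ∀ x : ℤ, a + 2*t ≤ x → evolve ω η (t+1) x = evolve ω η' (t+1) x := by
  intro t
  induction t with
  | zero =>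
    intro x hx
    show update η (ω 0) x = update η' (ω 0) x
    by_cases hx2 : a + 2 ≤ x
    · exact update_congr (fun y h1 h2 => h0 y (by omega))
    · have hst : ¬ Unstable η x ∧ ¬ Unstable η' x := by
        rcases (by omega : x = a ∨ x = a + 1) with rfl | rfl <;> exact ⟨‹_›, ‹_›⟩
      rw [update_stable hst.1, update_stable hst.2]
      exact h0 x (by omega)
  | succ t ih =>
    intro x hx
    show update (evolve ω η (t+1)) (ω (t+1)) x = update (evolve ω η' (t+1)) (ω (t+1)) x
    exact update_congr (fun y h1 h2 => ih y (by omega))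

lemma evolve_agree_right (ω : ℕ → ℤ → Bool) (η η' : Config) (b : ℤ)
    (h0 : ∀ x, x ≤ b → η x = η' x)
    (hs1 : ¬ Unstable η (b-1)) (hs2 : ¬ Unstable η b)
    (hs1' : ¬ Unstable η' (b-1)) (hs2' : ¬ Unstable η' b) :
    ∀ t : ℕ, ∀ x : ℤ, x ≤ b - 2*t → evolve ω η (t+1) x = evolve ω η' (t+1) x := by
  intro t
  induction t with
  | zero =>
    intro x hx
    show update η (ω 0) x = update η' (ω 0) x
    by_cases hx2 : x ≤ b - 2
    · exact update_congr (fun y h1 h2 => h0 y (by omega))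
    · have hst : ¬ Unstable η x ∧ ¬ Unstable η' x := by
        rcases (by omega : x = b - 1 ∨ x = b) with rfl | rfl <;> exact ⟨‹_›, ‹_›⟩
      rw [update_stable hst.1, update_stable hst.2]
      exact h0 x (by omega)
  | succ t ih =>
    intro x hx
    show update (evolve ω η (t+1)) (ω (t+1)) x = update (evolve ω η' (t+1)) (ω (t+1)) x
    exact update_congr (fun y h1 h2 => ih y (by omega))

lemma toNat_cast_le {a : ℤ} {N : ℕ} : ((a.toNat : ℕ∞)) ≤ (N : ℕ∞) ↔ a ≤ (N : ℤ) := by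
  rw [Nat.cast_le, Int.toNat_le]

lemma toNat_cast_zero {a : ℤ} (h : a ≤ 0) {m : ℕ∞} : ((a.toNat : ℕ∞)) ≤ m := by
  rw [Int.toNat_eq_zero.mpr h]; exact zero_le

lemma toNat_cast_mono {a b : ℤ} (h : a ≤ b) {m : ℕ∞} (hb : ((b.toNat : ℕ∞)) ≤ m) :
    ((a.toNat : ℕ∞)) ≤ m := le_trans (Nat.cast_le.mpr (Int.toNat_le_toNat h)) hb

/-- Left tail replaced by a strictly alternating (hence everywhere stable) pattern. -/
def extL (η : Config) (N : ℕ) : Config := fun x =>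
  if -(N:ℤ) ≤ x then η x
  else if (x + N) % 2 = 0 then η (-(N:ℤ)) else !(η (-(N:ℤ)))

lemma extL_eq {η : Config} {N : ℕ} {x : ℤ} (h : -(N:ℤ) ≤ x) : extL η N x = η x := if_pos h

lemma extL_alt (η : Config) (N : ℕ) (x : ℤ) (hx : x ≤ -(N:ℤ) - 1) :
    extL η N x ≠ extL η N (x+1) := by
  have hA : ¬ -(N:ℤ) ≤ x := by omega
  unfold extL
  rw [if_neg hA]
  by_cases h1 : x + 1 ≤ -(N:ℤ) - 1
  · have hB : ¬ -(N:ℤ) ≤ x + 1 := by omega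
    rw [if_neg hB]
    by_cases hp : (x + (N:ℤ)) % 2 = 0
    · have hq : ¬ (x + 1 + (N:ℤ)) % 2 = 0 := by omega
      rw [if_pos hp, if_neg hq]; simp
    · have hq : (x + 1 + (N:ℤ)) % 2 = 0 := by omega
      rw [if_neg hp, if_pos hq]; simp
  · have hx1 : x = -(N:ℤ) - 1 := by omega
    have hp : ¬ (x + (N:ℤ)) % 2 = 0 := by omega
    have hB : -(N:ℤ) ≤ x + 1 := by omega
    rw [if_neg hp, if_pos hB]
    have hxx : x + 1 = -(N:ℤ) := by omega
    rw [hxx]; simp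

lemma extL_no_triple {η : Config} {N : ℕ} {m : ℕ∞} (hw : SWindow η (N : ℕ∞) m)
    (a b c : ℤ) (hb : b = a + 1) (hc : c = a + 2) (ham : ((a.toNat : ℕ∞)) ≤ m) :
    ¬ (extL η N a = extL η N b ∧ extL η N b = extL η N c) := by
  subst hb hc
  rintro ⟨h1, h2⟩
  by_cases ha : -(N:ℤ) ≤ a
  · rw [extL_eq ha, extL_eq (by omega)] at h1
    rw [extL_eq (by omega), extL_eq (by omega)] at h2
    exact hw.1 a (toNat_cast_le.mpr (by omega)) ham (Or.inr (Or.inr ⟨h1, h2⟩))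
  · exact extL_alt η N a (by omega) h1

lemma SWindow_extL {η : Config} {N : ℕ} {m : ℕ∞} (hw : SWindow η (N : ℕ∞) m) (hN : 2 ≤ N) :
    SWindow (extL η N) ⊤ m := by
  refine ⟨?_, ?_, ?_⟩
  · intro i _ him hU
    rcases hU with ⟨h1, h2⟩ | ⟨h1, h2⟩ | ⟨h1, h2⟩
    · exact extL_no_triple hw (i-2) (i-1) i (by omega) (by omega)
        (toNat_cast_mono (by omega) him) ⟨h1, h2⟩
    · exact extL_no_triple hw (i-1) i (i+1) (by omega) (by omega)
        (toNat_cast_mono (by omega) him) ⟨h1, h2⟩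
    · exact extL_no_triple hw i (i+1) (i+2) (by omega) (by omega) him ⟨h1, h2⟩
  · intro nn h; simp at h
  · intro mm hmm
    have h := hw.2.2 mm hmm
    have hcg : ∀ y, ((mm:ℤ) + 1) - 2 ≤ y → y ≤ ((mm:ℤ) + 1) + 2 → extL η N y = η y :=
      fun y hy1 _ => extL_eq (by omega)
    exact (unstable_congr hcg).mpr h

lemma SWindow_extL_stable {η : Config} {N : ℕ} {m : ℕ∞} (hw : SWindow η (N : ℕ∞) m)
    (hN : 2 ≤ N) :
    ¬ Unstable (extL η N) (-(N:ℤ)) ∧ ¬ Unstable (extL η N) (-(N:ℤ) + 1) :=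
  ⟨(SWindow_extL hw hN).1 _ le_top (toNat_cast_zero (by omega)),
   (SWindow_extL hw hN).1 _ le_top (toNat_cast_zero (by omega))⟩

/-- Left tail replaced by: a monochromatic block (making `-N-1` unstable) then alternating. -/
def capL (η : Config) (N : ℕ) : Config := fun x =>
  if -(N:ℤ) ≤ x then η x
  else if -(N:ℤ) - 4 ≤ x then !(η (-(N:ℤ)))
  else if (x + N) % 2 = 0 then !(η (-(N:ℤ))) else η (-(N:ℤ))

lemma capL_eq {η : Config} {N : ℕ} {x : ℤ} (h : -(N:ℤ) ≤ x) : capL η N x = η x := if_pos h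

lemma capL_blk {η : Config} {N : ℕ} {x : ℤ} (h1 : -(N:ℤ) - 4 ≤ x) (h2 : x ≤ -(N:ℤ) - 1) :
    capL η N x = !(η (-(N:ℤ))) := by
  unfold capL; rw [if_neg (by omega), if_pos h1]

lemma capL_alt (η : Config) (N : ℕ) (x : ℤ) (hx : x ≤ -(N:ℤ) - 5) :
    capL η N x ≠ capL η N (x+1) := by
  have hA : ¬ -(N:ℤ) ≤ x := by omega
  have hA2 : ¬ -(N:ℤ) - 4 ≤ x := by omega
  have hB : ¬ -(N:ℤ) ≤ x + 1 := by omega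
  unfold capL
  rw [if_neg hA, if_neg hA2, if_neg hB]
  by_cases h1 : x + 1 ≤ -(N:ℤ) - 5
  · have hB2 : ¬ -(N:ℤ) - 4 ≤ x + 1 := by omega
    rw [if_neg hB2]
    by_cases hp : (x + (N:ℤ)) % 2 = 0
    · have hq : ¬ (x + 1 + (N:ℤ)) % 2 = 0 := by omega
      rw [if_pos hp, if_neg hq]; simp
    · have hq : (x + 1 + (N:ℤ)) % 2 = 0 := by omega
      rw [if_neg hp, if_pos hq]; simp
  · have hB2 : -(N:ℤ) - 4 ≤ x + 1 := by omega
    have hp : ¬ (x + (N:ℤ)) % 2 = 0 := by omega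
    rw [if_neg hp, if_pos hB2]
    simp

lemma capL_no_triple {η : Config} {N : ℕ} {m : ℕ∞} (hw : SWindow η ⊤ m)
    (a b c : ℤ) (hb : b = a + 1) (hc : c = a + 2) (hlo : -(N:ℤ) - 2 ≤ a)
    (ham : ((a.toNat : ℕ∞)) ≤ m) :
    ¬ (capL η N a = capL η N b ∧ capL η N b = capL η N c) := by
  subst hb hc
  rintro ⟨h1, h2⟩
  by_cases ha : -(N:ℤ) ≤ a
  · rw [capL_eq ha, capL_eq (by omega)] at h1
    rw [capL_eq (by omega), capL_eq (by omega)] at h2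
    exact hw.1 a le_top ham (Or.inr (Or.inr ⟨h1, h2⟩))
  · rcases (by omega : a = -(N:ℤ) - 1 ∨ a = -(N:ℤ) - 2) with rfl | rfl
    · rw [capL_blk (by omega) (by omega),
        (by ring_nf : -(N:ℤ) - 1 + 1 = -(N:ℤ))] at h1
      rw [capL_eq (by omega)] at h1
      simp at h1
    · rw [(by ring_nf : -(N:ℤ) - 2 + 1 = -(N:ℤ) - 1),
        (by ring_nf : -(N:ℤ) - 2 + 2 = -(N:ℤ))] at h2
      rw [capL_blk (by omega) (by omega), capL_eq (by omega)] at h2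
      simp at h2

lemma SWindow_capL {η : Config} {N : ℕ} {m : ℕ∞} (hw : SWindow η ⊤ m) (hN : 2 ≤ N) :
    SWindow (capL η N) (N : ℕ∞) m := by
  refine ⟨?_, ?_, ?_⟩
  · intro i hin him hU
    have hi : -(N:ℤ) ≤ i := by
      have := toNat_cast_le.mp hin; omega
    rcases hU with ⟨h1, h2⟩ | ⟨h1, h2⟩ | ⟨h1, h2⟩
    · exact capL_no_triple hw (i-2) (i-1) i (by omega) (by omega) (by omega)
        (toNat_cast_mono (by omega) him) ⟨h1, h2⟩
    · exact capL_no_triple hw (i-1) i (i+1) (by omega) (by omega) (by omega)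
        (toNat_cast_mono (by omega) him) ⟨h1, h2⟩
    · exact capL_no_triple hw i (i+1) (i+2) (by omega) (by omega) (by omega) him ⟨h1, h2⟩
  · intro nn hnn
    have hnN : nn = N := by exact_mod_cast hnn.symm
    subst hnN
    refine Or.inl ⟨?_, ?_⟩
    · rw [capL_blk (by omega) (by omega), capL_blk (by omega) (by omega)]
    · rw [capL_blk (by omega) (by omega), capL_blk (by omega) (by omega)]
  · intro mm hmm
    have h := hw.2.2 mm hmm
    have hcg : ∀ y, ((mm:ℤ) + 1) - 2 ≤ y → y ≤ ((mm:ℤ) + 1) + 2 → capL η N y = η y :=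
      fun y hy1 _ => capL_eq (by omega)
    exact (unstable_congr hcg).mpr h

lemma SWindow_capL_stable {η : Config} {N : ℕ} {m : ℕ∞} (hw : SWindow η ⊤ m) (hN : 2 ≤ N) :
    ¬ Unstable (capL η N) (-(N:ℤ)) ∧ ¬ Unstable (capL η N) (-(N:ℤ) + 1) :=
  ⟨(SWindow_capL hw hN).1 _ (toNat_cast_le.mpr (by omega)) (toNat_cast_zero (by omega)),
   (SWindow_capL hw hN).1 _ (toNat_cast_le.mpr (by omega)) (toNat_cast_zero (by omega))⟩

lemma triple_unstable {η : Config} {y : ℤ} (h1 : η y = η (y+1)) (h2 : η (y+1) = η (y+2)) :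
    Unstable η (y+2) := by
  refine Or.inl ⟨?_, ?_⟩
  · have e1 : y + 2 - 2 = y := by ring
    have e2 : y + 2 - 1 = y + 1 := by ring
    rw [e1, e2]; exact h1
  · have e2 : y + 2 - 1 = y + 1 := by ring
    rw [e2]; exact h2

/-- Right tail replaced by a strictly alternating (hence everywhere stable) pattern. -/
def extR (η : Config) (M : ℕ) : Config := fun x =>
  if x ≤ (M:ℤ) then η x
  else if (x - M) % 2 = 0 then η (M:ℤ) else !(η (M:ℤ))

lemma extR_eq {η : Config} {M : ℕ} {x : ℤ} (h : x ≤ (M:ℤ)) : extR η M x = η x := if_pos h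

lemma extR_alt (η : Config) (M : ℕ) (x : ℤ) (hx : (M:ℤ) ≤ x) :
    extR η M x ≠ extR η M (x+1) := by
  have hB : ¬ x + 1 ≤ (M:ℤ) := by omega
  unfold extR
  rw [if_neg hB]
  by_cases h1 : x ≤ (M:ℤ)
  · have hq : ¬ (x + 1 - (M:ℤ)) % 2 = 0 := by omega
    rw [if_pos h1, if_neg hq]
    have hxx : x = (M:ℤ) := by omega
    rw [hxx]; simp
  · rw [if_neg h1]
    by_cases hp : (x - (M:ℤ)) % 2 = 0
    · have hq : ¬ (x + 1 - (M:ℤ)) % 2 = 0 := by omega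
      rw [if_pos hp, if_neg hq]; simp
    · have hq : (x + 1 - (M:ℤ)) % 2 = 0 := by omega
      rw [if_neg hp, if_pos hq]; simp

lemma extR_no_triple {η : Config} {M : ℕ} {n : ℕ∞} (hw : SWindow η n (M : ℕ∞))
    (y : ℤ) (hyn : (((-(y+2)).toNat : ℕ∞)) ≤ n) :
    ¬ (extR η M y = extR η M (y+1) ∧ extR η M (y+1) = extR η M (y+2)) := by
  rintro ⟨h1, h2⟩
  by_cases hc : y + 2 ≤ (M:ℤ)
  · rw [extR_eq (by omega), extR_eq (by omega)] at h1
    rw [extR_eq (by omega), extR_eq hc] at h2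
    exact hw.1 (y+2) hyn (toNat_cast_le.mpr hc) (triple_unstable h1 h2)
  · by_cases hb : (M:ℤ) ≤ y
    · exact extR_alt η M y hb h1
    · have e : y + 2 = y + 1 + 1 := by ring
      rw [e] at h2
      exact extR_alt η M (y+1) (by omega) h2

lemma SWindow_extR {η : Config} {M : ℕ} {n : ℕ∞} (hw : SWindow η n (M : ℕ∞)) (hM : 2 ≤ M) :
    SWindow (extR η M) n ⊤ := by
  refine ⟨?_, ?_, ?_⟩
  · intro i hin _ hU
    rcases hU with ⟨h1, h2⟩ | ⟨h1, h2⟩ | ⟨h1, h2⟩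
    · refine extR_no_triple hw (i-2) (toNat_cast_mono (by omega) hin) ⟨?_, ?_⟩
      · have e1 : i - 2 + 1 = i - 1 := by ring
        rw [e1]; exact h1
      · have e1 : i - 2 + 1 = i - 1 := by ring
        have e2 : i - 2 + 2 = i := by ring
        rw [e1, e2]; exact h2
    · refine extR_no_triple hw (i-1) (toNat_cast_mono (by omega) hin) ⟨?_, ?_⟩
      · have e1 : i - 1 + 1 = i := by ring
        rw [e1]; exact h1
      · have e1 : i - 1 + 1 = i := by ring
        have e2 : i - 1 + 2 = i + 1 := by ring
        rw [e1, e2]; exact h2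
    · exact extR_no_triple hw i (toNat_cast_mono (by omega) hin) ⟨h1, h2⟩
  · intro nn hnn
    have h := hw.2.1 nn hnn
    have hcg : ∀ y, (-(nn:ℤ) - 1) - 2 ≤ y → y ≤ (-(nn:ℤ) - 1) + 2 → extR η M y = η y :=
      fun y _ hy2 => extR_eq (by omega)
    exact (unstable_congr hcg).mpr h
  · intro mm h; simp at h

/-- Right tail replaced by: a monochromatic block (making `M+1` unstable) then alternating. -/
def capR (η : Config) (M : ℕ) : Config := fun x =>
  if x ≤ (M:ℤ) then η x
  else if x ≤ (M:ℤ) + 4 then !(η (M:ℤ))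
  else if (x - M) % 2 = 0 then !(η (M:ℤ)) else η (M:ℤ)

lemma capR_eq {η : Config} {M : ℕ} {x : ℤ} (h : x ≤ (M:ℤ)) : capR η M x = η x := if_pos h

lemma capR_blk {η : Config} {M : ℕ} {x : ℤ} (h1 : (M:ℤ) + 1 ≤ x) (h2 : x ≤ (M:ℤ) + 4) :
    capR η M x = !(η (M:ℤ)) := by
  unfold capR; rw [if_neg (by omega), if_pos h2]

lemma capR_no_triple {η : Config} {M : ℕ} {n : ℕ∞} (hw : SWindow η n ⊤)
    (y : ℤ) (hyn : (((-(y+2)).toNat : ℕ∞)) ≤ n) (hyM : y ≤ (M:ℤ)) :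
    ¬ (capR η M y = capR η M (y+1) ∧ capR η M (y+1) = capR η M (y+2)) := by
  rintro ⟨h1, h2⟩
  by_cases hc : y + 2 ≤ (M:ℤ)
  · rw [capR_eq (by omega), capR_eq (by omega)] at h1
    rw [capR_eq (by omega), capR_eq hc] at h2
    exact hw.1 (y+2) hyn le_top (triple_unstable h1 h2)
  · by_cases hb : y + 1 ≤ (M:ℤ)
    · rw [capR_eq hb, capR_blk (by omega) (by omega)] at h2
      have hy : y + 1 = (M:ℤ) := by omega
      rw [hy] at h2
      simp at h2
    · rw [capR_eq (by omega), capR_blk (by omega) (by omega)] at h1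
      have hy : y = (M:ℤ) := by omega
      rw [hy] at h1
      simp at h1

lemma SWindow_capR {η : Config} {M : ℕ} {n : ℕ∞} (hw : SWindow η n ⊤) (hM : 2 ≤ M) :
    SWindow (capR η M) n (M : ℕ∞) := by
  refine ⟨?_, ?_, ?_⟩
  · intro i hin him hU
    have hi : i ≤ (M:ℤ) := toNat_cast_le.mp him
    rcases hU with ⟨h1, h2⟩ | ⟨h1, h2⟩ | ⟨h1, h2⟩
    · refine capR_no_triple (M := M) hw (i-2)
        (toNat_cast_mono (show -(i-2+2) ≤ -i by omega) hin) (by omega) ⟨?_, ?_⟩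
      · have e1 : i - 2 + 1 = i - 1 := by ring
        rw [e1]; exact h1
      · have e1 : i - 2 + 1 = i - 1 := by ring
        have e2 : i - 2 + 2 = i := by ring
        rw [e1, e2]; exact h2
    · refine capR_no_triple (M := M) hw (i-1)
        (toNat_cast_mono (show -(i-1+2) ≤ -i by omega) hin) (by omega) ⟨?_, ?_⟩
      · have e1 : i - 1 + 1 = i := by ring
        rw [e1]; exact h1
      · have e1 : i - 1 + 1 = i := by ring
        have e2 : i - 1 + 2 = i + 1 := by ring
        rw [e1, e2]; exact h2
    · exact capR_no_triple (M := M) hw i (toNat_cast_mono (show -(i+2) ≤ -i by omega) hin) hi ⟨h1, h2⟩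
  · intro nn hnn
    have h := hw.2.1 nn hnn
    have hcg : ∀ y, (-(nn:ℤ) - 1) - 2 ≤ y → y ≤ (-(nn:ℤ) - 1) + 2 → capR η M y = η y :=
      fun y _ hy2 => capR_eq (by omega)
    exact (unstable_congr hcg).mpr h
  · intro mm hmm
    have hmM : mm = M := by exact_mod_cast hmm.symm
    subst hmM
    refine Or.inr (Or.inr ⟨?_, ?_⟩)
    · rw [capR_blk (by omega) (by omega), capR_blk (by omega) (by omega)]
    · rw [capR_blk (by omega) (by omega), capR_blk (by omega) (by omega)]

lemma SWindow_extL_stable2 {η : Config} {N : ℕ} {m : ℕ∞} (hw : SWindow η (N : ℕ∞) m)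
    (hN : 2 ≤ N) :
    ¬ Unstable (extL η N) (-(N:ℤ)) ∧ ¬ Unstable (extL η N) (-(N:ℤ) + 1) :=
  ⟨(SWindow_extL hw hN).1 _ le_top (toNat_cast_zero (by omega)),
   (SWindow_extL hw hN).1 _ le_top (toNat_cast_zero (by omega))⟩

lemma SWindow_extR_stable {η : Config} {M : ℕ} {n : ℕ∞} (hw : SWindow η n (M : ℕ∞))
    (hM : 2 ≤ M) :
    ¬ Unstable (extR η M) ((M:ℤ) - 1) ∧ ¬ Unstable (extR η M) (M:ℤ) :=
  ⟨(SWindow_extR hw hM).1 _ (toNat_cast_zero (by omega)) le_top,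
   (SWindow_extR hw hM).1 _ (toNat_cast_zero (by omega)) le_top⟩

lemma SWindow_capR_stable {η : Config} {M : ℕ} {n : ℕ∞} (hw : SWindow η n ⊤) (hM : 2 ≤ M) :
    ¬ Unstable (capR η M) ((M:ℤ) - 1) ∧ ¬ Unstable (capR η M) (M:ℤ) :=
  ⟨(SWindow_capR hw hM).1 _ (toNat_cast_zero (by omega)) (toNat_cast_le.mpr (by omega)),
   (SWindow_capR hw hM).1 _ (toNat_cast_zero (by omega)) (toNat_cast_le.mpr (by omega))⟩

lemma pS_eq_top_left (μ : Measure (ℕ → ℤ → Bool)) (k N : ℕ) (m : ℕ∞)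
    (hk : 1 ≤ k) (hN : 2 * k ≤ N) : pS μ k (N : ℕ∞) m = pS μ k ⊤ m := by
  obtain ⟨k', rfl⟩ : ∃ k', k = k' + 1 := ⟨k - 1, by omega⟩
  have hN2 : 2 ≤ N := by omega
  have hNZ : (2 * ((k':ℤ) + 1)) ≤ (N : ℤ) := by exact_mod_cast hN
  unfold pS
  apply le_antisymm
  · refine iSup₂_le fun η hη => ?_
    have hη' := SWindow_extL hη hN2
    have hstη1 : ¬ Unstable η (-(N:ℤ)) :=
      hη.1 _ (toNat_cast_le.mpr (by omega)) (toNat_cast_zero (by omega))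
    have hstη2 : ¬ Unstable η (-(N:ℤ) + 1) :=
      hη.1 _ (toNat_cast_le.mpr (by omega)) (toNat_cast_zero (by omega))
    have hst' := SWindow_extL_stable2 hη hN2
    have hkey : {ω : ℕ → ℤ → Bool | Unstable (evolve ω η (k'+1)) 0}
        = {ω | Unstable (evolve ω (extL η N) (k'+1)) 0} := by
      ext ω
      simp only [Set.mem_setOf_eq]
      refine unstable_congr fun y hy1 hy2 => ?_
      exact evolve_agree_left ω η (extL η N) (-(N:ℤ))
        (fun x hx => (extL_eq hx).symm) hstη1 hstη2 hst'.1 hst'.2 k' y (by omega)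
    rw [hkey]
    exact le_iSup₂ (f := fun η _ => μ {ω | Unstable (evolve ω η (k'+1)) 0}) (extL η N) hη'
  · refine iSup₂_le fun η hη => ?_
    have hη' := SWindow_capL hη hN2
    have hstη1 : ¬ Unstable η (-(N:ℤ)) := hη.1 _ le_top (toNat_cast_zero (by omega))
    have hstη2 : ¬ Unstable η (-(N:ℤ) + 1) := hη.1 _ le_top (toNat_cast_zero (by omega))
    have hst' := SWindow_capL_stable hη hN2
    have hkey : {ω : ℕ → ℤ → Bool | Unstable (evolve ω η (k'+1)) 0}
        = {ω | Unstable (evolve ω (capL η N) (k'+1)) 0} := by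
      ext ω
      simp only [Set.mem_setOf_eq]
      refine unstable_congr fun y hy1 hy2 => ?_
      exact evolve_agree_left ω η (capL η N) (-(N:ℤ))
        (fun x hx => (capL_eq hx).symm) hstη1 hstη2 hst'.1 hst'.2 k' y (by omega)
    rw [hkey]
    exact le_iSup₂ (f := fun η _ => μ {ω | Unstable (evolve ω η (k'+1)) 0}) (capL η N) hη'

lemma pS_eq_top_right (μ : Measure (ℕ → ℤ → Bool)) (k M : ℕ) (n : ℕ∞)
    (hk : 1 ≤ k) (hM : 2 * k ≤ M) : pS μ k n (M : ℕ∞) = pS μ k n ⊤ := by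
  obtain ⟨k', rfl⟩ : ∃ k', k = k' + 1 := ⟨k - 1, by omega⟩
  have hM2 : 2 ≤ M := by omega
  have hMZ : (2 * ((k':ℤ) + 1)) ≤ (M : ℤ) := by exact_mod_cast hM
  unfold pS
  apply le_antisymm
  · refine iSup₂_le fun η hη => ?_
    have hη' := SWindow_extR hη hM2
    have hstη1 : ¬ Unstable η ((M:ℤ) - 1) :=
      hη.1 _ (toNat_cast_zero (by omega)) (toNat_cast_le.mpr (by omega))
    have hstη2 : ¬ Unstable η (M:ℤ) :=
      hη.1 _ (toNat_cast_zero (by omega)) (toNat_cast_le.mpr (by omega))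
    have hst' := SWindow_extR_stable hη hM2
    have hkey : {ω : ℕ → ℤ → Bool | Unstable (evolve ω η (k'+1)) 0}
        = {ω | Unstable (evolve ω (extR η M) (k'+1)) 0} := by
      ext ω
      simp only [Set.mem_setOf_eq]
      refine unstable_congr fun y hy1 hy2 => ?_
      exact evolve_agree_right ω η (extR η M) (M:ℤ)
        (fun x hx => (extR_eq hx).symm) hstη1 hstη2 hst'.1 hst'.2 k' y (by omega)
    rw [hkey]
    exact le_iSup₂ (f := fun η _ => μ {ω | Unstable (evolve ω η (k'+1)) 0}) (extR η M) hη'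
  · refine iSup₂_le fun η hη => ?_
    have hη' := SWindow_capR hη hM2
    have hstη1 : ¬ Unstable η ((M:ℤ) - 1) :=
      hη.1 _ (toNat_cast_zero (by omega)) le_top
    have hstη2 : ¬ Unstable η (M:ℤ) :=
      hη.1 _ (toNat_cast_zero (by omega)) le_top
    have hst' := SWindow_capR_stable hη hM2
    have hkey : {ω : ℕ → ℤ → Bool | Unstable (evolve ω η (k'+1)) 0}
        = {ω | Unstable (evolve ω (capR η M) (k'+1)) 0} := by
      ext ω
      simp only [Set.mem_setOf_eq]
      refine unstable_congr fun y hy1 hy2 => ?_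
      exact evolve_agree_right ω η (capR η M) (M:ℤ)
        (fun x hx => (capR_eq hx).symm) hstη1 hstη2 hst'.1 hst'.2 k' y (by omega)
    rw [hkey]
    exact le_iSup₂ (f := fun η _ => μ {ω | Unstable (evolve ω η (k'+1)) 0}) (capR η M) hη'

/-- `p_k^S(n, m)` does not depend on `n` as long as `n ≥ 2k` (it then equals
`p_k^S(∞, m)`), and symmetrically in the second coordinate. -/
theorem pS_constant_far (μ : Measure (ℕ → ℤ → Bool)) [IsProbabilityMeasure μ]
    (hμ : IIDCoins μ) (k : ℕ) (hk : 1 ≤ k) :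
    (∀ (m : ℕ∞) (n₁ n₂ : ℕ∞), 2 * k ≤ n₁ → 2 * k ≤ n₂ →
      pS μ k n₁ m = pS μ k n₂ m ∧ pS μ k n₁ m = pS μ k ⊤ m) ∧
    (∀ (n : ℕ∞) (m₁ m₂ : ℕ∞), 2 * k ≤ m₁ → 2 * k ≤ m₂ →
      pS μ k n m₁ = pS μ k n m₂ ∧ pS μ k n m₁ = pS μ k n ⊤) := by
  constructor
  · intro m n₁ n₂ h1 h2
    have key : ∀ n : ℕ∞, 2 * (k : ℕ∞) ≤ n → pS μ k n m = pS μ k ⊤ m := by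
      intro n hn
      induction n using ENat.recTopCoe with
      | top => rfl
      | coe N => exact pS_eq_top_left μ k N m hk (by exact_mod_cast hn)
    exact ⟨(key _ h1).trans (key _ h2).symm, key _ h1⟩
  · intro n m₁ m₂ h1 h2
    have key : ∀ m : ℕ∞, 2 * (k : ℕ∞) ≤ m → pS μ k n m = pS μ k n ⊤ := by
      intro m hm
      induction m using ENat.recTopCoe with
      | top => rfl
      | coe M => exact pS_eq_top_right μ k M n hk (by exact_mod_cast hm)
    exact ⟨(key _ h1).trans (key _ h2).symm, key _ h1⟩
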